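/- Let N ≥ 2, τ > 0, and s, ŝ : Fin N × Fin N → ℝ with s(i,i) = ŝ(i,i) for all i and ŝ(i,j) ≤ s(i,j) for all i ≠ j. Suppose there exist constants p₁, p₂ ∈ ℝ such that s(i,i) ≥ p₁ for all i and s(i,j) ≤ p₂ for all i ≠ j. Define L = (1/N)·∑_i log( exp(s(i,i)/τ) / ∑_j exp(s(i,j)/τ) ) and L^s similarly with ŝ. Then L^s − L ≤ (N−1)·exp((p₂ − p₁)/τ). -/
import Mathlib


theorem stmt3 (N : ℕ) (hN : 2 ≤ N) (τ : ℝ) (hτ : 0 < τ)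
    (s shat : Fin N → Fin N → ℝ)
    (hdiag : ∀ i, s i i = shat i i)
    (hle : ∀ i j, i ≠ j → shat i j ≤ s i j)
    (p₁ p₂ : ℝ)
    (hp₁ : ∀ i, p₁ ≤ s i i)
    (hp₂ : ∀ i j, i ≠ j → s i j ≤ p₂) :
    ((1 / (N : ℝ)) * ∑ i : Fin N,
        Real.log (Real.exp (shat i i / τ) / ∑ j : Fin N, Real.exp (shat i j / τ))) -
      ((1 / (N : ℝ)) * ∑ i : Fin N,
        Real.log (Real.exp (s i i / τ) / ∑ j : Fin N, Real.exp (s i j / τ))) ≤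
      ((N : ℝ) - 1) * Real.exp ((p₂ - p₁) / τ) := by
  have hNpos : (0:ℝ) < N := by positivity
  set C : ℝ := ((N : ℝ) - 1) * Real.exp ((p₂ - p₁) / τ) with hCdef
  have key : ∀ i : Fin N,
      Real.log (Real.exp (shat i i / τ) / ∑ j : Fin N, Real.exp (shat i j / τ)) -
      Real.log (Real.exp (s i i / τ) / ∑ j : Fin N, Real.exp (s i j / τ)) ≤ C := by
    intro i
    set A : ℝ := ∑ j : Fin N, Real.exp (s i j / τ) with hA
    set B : ℝ := ∑ j : Fin N, Real.exp (shat i j / τ) with hB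
    have hApos : 0 < A :=
      Finset.sum_pos (fun j _ => Real.exp_pos _) ⟨i, Finset.mem_univ i⟩
    have hBpos : 0 < B :=
      Finset.sum_pos (fun j _ => Real.exp_pos _) ⟨i, Finset.mem_univ i⟩
    have hBA : B ≤ A := by
      apply Finset.sum_le_sum
      intro j _
      by_cases h : i = j
      · subst h; rw [hdiag]
      · exact Real.exp_le_exp.2 (div_le_div_of_nonneg_right (hle i j h) hτ.le)
    have hBlo : Real.exp (p₁ / τ) ≤ B := by
      have h1 : Real.exp (p₁ / τ) ≤ Real.exp (shat i i / τ) := by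
        rw [← hdiag]
        exact Real.exp_le_exp.2 (div_le_div_of_nonneg_right (hp₁ i) hτ.le)
      calc Real.exp (p₁ / τ) ≤ Real.exp (shat i i / τ) := h1
        _ ≤ B := Finset.single_le_sum (f := fun j => Real.exp (shat i j / τ)) (fun j _ => (Real.exp_pos _).le) (Finset.mem_univ i)
    have hAB : A - B ≤ ((N : ℝ) - 1) * Real.exp (p₂ / τ) := by
      have : A - B = ∑ j : Fin N, (Real.exp (s i j / τ) - Real.exp (shat i j / τ)) := by
        rw [Finset.sum_sub_distrib]
      rw [this]
      have hsum : ∑ j : Fin N, (Real.exp (s i j / τ) - Real.exp (shat i j / τ))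
          = ∑ j ∈ Finset.univ.erase i, (Real.exp (s i j / τ) - Real.exp (shat i j / τ)) := by
        rw [← Finset.sum_erase]
        rw [hdiag, sub_self]
      rw [hsum]
      calc ∑ j ∈ Finset.univ.erase i, (Real.exp (s i j / τ) - Real.exp (shat i j / τ))
          ≤ ∑ j ∈ Finset.univ.erase i, Real.exp (p₂ / τ) := by
            apply Finset.sum_le_sum
            intro j hj
            have hne : i ≠ j := fun h => (Finset.mem_erase.1 hj).1 h.symm
            have h1 : Real.exp (s i j / τ) ≤ Real.exp (p₂ / τ) :=
              Real.exp_le_exp.2 (div_le_div_of_nonneg_right (hp₂ i j hne) hτ.le)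
            have h2 : 0 ≤ Real.exp (shat i j / τ) := (Real.exp_pos _).le
            linarith
        _ = ((N : ℝ) - 1) * Real.exp (p₂ / τ) := by
            rw [Finset.sum_const]
            rw [Finset.card_erase_of_mem (Finset.mem_univ i), Finset.card_univ,
              Fintype.card_fin]
            rw [nsmul_eq_mul]
            congr 1
            have : (1:ℕ) ≤ N := le_trans (by norm_num) hN
            push_cast [Nat.cast_sub this]
            ring
    have hlog1 : Real.log (Real.exp (shat i i / τ) / B)
        = shat i i / τ - Real.log B := by
      rw [Real.log_div (Real.exp_ne_zero _) (ne_of_gt hBpos), Real.log_exp]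
    have hlog2 : Real.log (Real.exp (s i i / τ) / A)
        = s i i / τ - Real.log A := by
      rw [Real.log_div (Real.exp_ne_zero _) (ne_of_gt hApos), Real.log_exp]
    rw [hlog1, hlog2, hdiag]
    have hlogAB : Real.log A - Real.log B ≤ (A - B) / B := by
      rw [← Real.log_div (ne_of_gt hApos) (ne_of_gt hBpos)]
      have h := Real.log_le_sub_one_of_pos (div_pos hApos hBpos)
      have : A / B - 1 = (A - B) / B := by field_simp
      linarith [this ▸ h]
    have hfinal : (A - B) / B ≤ C := by
      rw [hCdef]
      have h1 : (A - B) / B ≤ ((N : ℝ) - 1) * Real.exp (p₂ / τ) / Real.exp (p₁ / τ) := by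
        have hN1 : (0:ℝ) ≤ (N : ℝ) - 1 := by
          have : (2:ℝ) ≤ N := by exact_mod_cast hN
          linarith
        exact div_le_div₀ (by positivity) hAB (Real.exp_pos _) hBlo
      calc (A - B) / B ≤ ((N : ℝ) - 1) * Real.exp (p₂ / τ) / Real.exp (p₁ / τ) := h1
        _ = ((N : ℝ) - 1) * Real.exp ((p₂ - p₁) / τ) := by
            rw [sub_div, Real.exp_sub]
            ring
    linarith
  have hCnonneg : 0 ≤ C := by
    rw [hCdef]
    have : (2:ℝ) ≤ N := by exact_mod_cast hN
    have := Real.exp_pos ((p₂ - p₁) / τ)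
    nlinarith
  rw [← mul_sub, ← Finset.sum_sub_distrib]
  have hsum : ∑ i : Fin N,
      (Real.log (Real.exp (shat i i / τ) / ∑ j : Fin N, Real.exp (shat i j / τ)) -
       Real.log (Real.exp (s i i / τ) / ∑ j : Fin N, Real.exp (s i j / τ)))
      ≤ (N : ℝ) * C := by
    calc _ ≤ ∑ _i : Fin N, C := Finset.sum_le_sum fun i _ => key i
      _ = (N : ℝ) * C := by
        rw [Finset.sum_const, Finset.card_univ, Fintype.card_fin, nsmul_eq_mul]
  calc (1 / (N : ℝ)) * ∑ i : Fin N,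
      (Real.log (Real.exp (shat i i / τ) / ∑ j : Fin N, Real.exp (shat i j / τ)) -
       Real.log (Real.exp (s i i / τ) / ∑ j : Fin N, Real.exp (s i j / τ)))
      ≤ (1 / (N : ℝ)) * ((N : ℝ) * C) := by
        apply mul_le_mul_of_nonneg_left hsum (by positivity)
    _ = C := by field_simp
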